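/- Let M_n be the meta-chain hexagonal cactus of order n: n hexagons (6-cycles) in a chain where consecutive hexagons share exactly one vertex, and the two shared vertices of each internal hexagon are at distance 2. Then Mo(M_{2k}) = 80k² − 20k and Mo(M_{2k+1}) = 80k² + 60k for all k ≥ 1. -/

import Mathlib

open Finset

section MostarDefs

variable {V : Type*}

/-- Number of vertices of `G` strictly closer to `u` than to `v`. -/
noncomputable def closerCount (G : SimpleGraph V) (u v : V) : ℕ :=
  Nat.card {w : V // G.dist w u < G.dist w v}

/-- Contribution `|n_u - n_v|` of an edge, as a symmetric function on `Sym2 V`. -/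
noncomputable def mostarTerm (G : SimpleGraph V) : Sym2 V → ℕ :=
  Sym2.lift ⟨fun u v => ((closerCount G u v : ℤ) - closerCount G v u).natAbs,
    fun u v => by dsimp only; omega⟩

/-- The Mostar index of a finite graph. -/
noncomputable def mostar (G : SimpleGraph V) [Finite V] : ℕ :=
  letI := Fintype.ofFinite V
  letI := Classical.decEq V
  letI := Classical.decRel G.Adj
  ∑ e ∈ G.edgeFinset, mostarTerm G e

/-- Distance from a vertex `w` to an edge, as min over the endpoints. -/
noncomputable def vertexEdgeDist (G : SimpleGraph V) (w : V) : Sym2 V → ℕ :=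
  Sym2.lift ⟨fun x y => min (G.dist x w) (G.dist y w), fun _ _ => min_comm _ _⟩

/-- Number of edges of `G` strictly closer to `u` than to `v`. -/
noncomputable def edgeCloserCount (G : SimpleGraph V) (u v : V) : ℕ :=
  Nat.card {e : Sym2 V // e ∈ G.edgeSet ∧ vertexEdgeDist G u e < vertexEdgeDist G v e}

/-- Contribution `|m_u - m_v|` of an edge, as a symmetric function on `Sym2 V`. -/
noncomputable def emostarTerm (G : SimpleGraph V) : Sym2 V → ℕ :=
  Sym2.lift ⟨fun u v => ((edgeCloserCount G u v : ℤ) - edgeCloserCount G v u).natAbs,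
    fun u v => by dsimp only; omega⟩

/-- The edge Mostar index of a finite graph. -/
noncomputable def emostar (G : SimpleGraph V) [Finite V] : ℕ :=
  letI := Fintype.ofFinite V
  letI := Classical.decEq V
  letI := Classical.decRel G.Adj
  ∑ e ∈ G.edgeFinset, emostarTerm G e

end MostarDefs

/-- Global index of the `p`-th vertex of the `i`-th cycle in a chain of `n` cycles of
length `c`, where consecutive cycles share one vertex: position `0` of cycle `i` is the
entry cut vertex (identified with position `d` of cycle `i-1`). -/
def chainPos (c d i p : ℕ) : ℕ :=
  if p = 0 then (if i = 0 then 0 else (i - 1) * (c - 1) + d) else i * (c - 1) + p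

/-- The chain cactus consisting of `n` cycles of length `c` in a chain, where consecutive
cycles share exactly one vertex, and the two cut vertices of each internal cycle are at
positions `0` and `d` (hence at distance `min d (c - d)` in the cycle). -/
def cactusChain (n c d : ℕ) : SimpleGraph (Fin (n * (c - 1) + 1)) where
  Adj u v := u ≠ v ∧ ∃ i p q, i < n ∧ p < c ∧ q < c ∧
    ((p + 1) % c = q ∨ (q + 1) % c = p) ∧
    u.val = chainPos c d i p ∧ v.val = chainPos c d i q
  symm := ⟨by
    rintro u v ⟨hne, i, p, q, hi, hp, hq, hpq, hu, hv⟩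
    exact ⟨hne.symm, i, q, p, hi, hq, hp, hpq.symm, hv, hu⟩⟩
  loopless := ⟨fun u h => h.1 rfl⟩


set_option maxHeartbeats 1000000





namespace MH

def c6 (p q : ℕ) : ℕ := min (Nat.dist p q) (6 - Nat.dist p q)

def A (i p : ℕ) : ℕ := chainPos 6 2 i p

def cyc (v : ℕ) : ℕ := (v - 1) / 5

def pos (v : ℕ) : ℕ := if v = 0 then 0 else (v - 1) % 5 + 1

def Dc (i p j q : ℕ) : ℕ :=
  if i = j then c6 p q
  else if i < j then c6 2 p + 2 * (j - i - 1) + c6 0 q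
  else c6 0 p + 2 * (i - j - 1) + c6 2 q

def D (v w : ℕ) : ℕ := Dc (cyc v) (pos v) (cyc w) (pos w)

lemma A_eq (i p : ℕ) : A i p = if p = 0 then (if i = 0 then 0 else 5*i - 3) else 5*i + p := by
  simp only [A, chainPos]
  split_ifs <;> omega

lemma A_eq' (i p : ℕ) (h1 : 1 ≤ p) : A i p = 5*i + p := by rw [A_eq, if_neg (by omega)]

lemma cyc_A (i p : ℕ) (h1 : 1 ≤ p) (h5 : p ≤ 5) : cyc (A i p) = i := by
  rw [A_eq' i p h1]; simp only [cyc]; omega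

lemma pos_A (i p : ℕ) (h1 : 1 ≤ p) (h5 : p ≤ 5) : pos (A i p) = p := by
  rw [A_eq' i p h1]; simp only [pos]; rw [if_neg (by omega)]; omega

lemma A_zero (i : ℕ) (h : 1 ≤ i) : A i 0 = A (i-1) 2 := by
  rw [A_eq' (i-1) 2 (by norm_num), A_eq, if_pos rfl, if_neg (by omega)]; omega

lemma A_zero0 : A 0 0 = 0 := by simp [A_eq]

lemma pos_eq (m : ℕ) (h : 1 ≤ m) : pos m = (m-1) % 5 + 1 := if_neg (by omega)

lemma A_recover (m : ℕ) (h : 1 ≤ m) :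
    A (cyc m) (pos m) = m ∧ 1 ≤ pos m ∧ pos m ≤ 5 := by
  rw [pos_eq m h, A_eq' _ _ (by omega)]; simp only [cyc]; omega

lemma Dc_left (i j q : ℕ) : Dc (i+1) 0 j q = Dc i 2 j q := by
  simp only [Dc, c6, Nat.dist]
  split_ifs <;> omega

lemma Dc_right (i j p : ℕ) : Dc i p (j+1) 0 = Dc i p j 2 := by
  simp only [Dc, c6, Nat.dist]
  split_ifs <;> omega

lemma Ur (v j q : ℕ) (hq : q < 6) : D v (A j q) = Dc (cyc v) (pos v) j q := by
  rcases Nat.eq_zero_or_pos q with hq0 | hq1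
  · subst hq0
    rcases Nat.eq_zero_or_pos j with hj0 | hj1
    · subst hj0; rw [A_zero0]; rfl
    · rw [A_zero j hj1, D, cyc_A _ 2 (by norm_num) (by norm_num),
        pos_A _ 2 (by norm_num) (by norm_num)]
      have : j = (j-1) + 1 := by omega
      rw [this, Dc_right]
      congr 1 <;> omega
  · rw [D, cyc_A _ q hq1 (by omega), pos_A _ q hq1 (by omega)]

lemma U (i j p q : ℕ) (hp : p < 6) (hq : q < 6) :
    D (A i p) (A j q) = Dc i p j q := by
  rw [Ur _ j q hq]
  rcases Nat.eq_zero_or_pos p with hp0 | hp1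
  · subst hp0
    rcases Nat.eq_zero_or_pos i with hi0 | hi1
    · subst hi0; rw [A_zero0]; rfl
    · rw [A_zero i hi1, cyc_A _ 2 (by norm_num) (by norm_num),
        pos_A _ 2 (by norm_num) (by norm_num)]
      have : i = (i-1) + 1 := by omega
      rw [this, Dc_left]
      congr 2 <;> omega
  · rw [cyc_A _ p hp1 (by omega), pos_A _ p hp1 (by omega)]

lemma D_self (v : ℕ) : D v v = 0 := by
  unfold D Dc
  rw [if_pos rfl]
  simp only [c6, Nat.dist]
  omega

lemma D_eq_zero (u w : ℕ) (h : D u w = 0) : u = w := by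
  rcases Nat.eq_zero_or_pos u with hu | hu <;> rcases Nat.eq_zero_or_pos w with hw | hw
  · omega
  · subst hu
    simp only [D, Dc, c6, Nat.dist, cyc, pos, if_pos rfl, if_neg (by omega : ¬w = 0)] at h
    split_ifs at h <;> omega
  · subst hw
    simp only [D, Dc, c6, Nat.dist, cyc, pos, if_pos rfl, if_neg (by omega : ¬u = 0)] at h
    split_ifs at h <;> omega
  · simp only [D, Dc, c6, Nat.dist, cyc, pos,
      if_neg (by omega : ¬u = 0), if_neg (by omega : ¬w = 0)] at h
    split_ifs at h <;> omega


lemma A_eq_iff (i j p q : ℕ) (hp : p < 6) (hq : q < 6) :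
    A i p = A j q ↔ ((i = j ∧ p = q) ∨ (j = i+1 ∧ p = 2 ∧ q = 0) ∨ (i = j+1 ∧ p = 0 ∧ q = 2)) := by
  simp only [A_eq]
  split_ifs <;> omega

lemma cycstepF : ∀ p q : Fin 6, p ≠ q → ∃ r : Fin 6,
    (((p:ℕ)+1)%6 = r ∨ ((r:ℕ)+1)%6 = p) ∧ c6 r q + 1 = c6 p q := by decide

lemma cycstep (p q : ℕ) (hp : p < 6) (hq : q < 6) (hne : p ≠ q) :
    ∃ r, r < 6 ∧ ((p+1)%6 = r ∨ (r+1)%6 = p) ∧ c6 r q + 1 = c6 p q := by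
  obtain ⟨r, h1, h2⟩ := cycstepF ⟨p, hp⟩ ⟨q, hq⟩ (by simp [Fin.ext_iff]; exact hne)
  exact ⟨r.1, r.2, h1, h2⟩

lemma DcLip (i j p r q : ℕ) (hp : p < 6) (hr : r < 6) (hq : q < 6)
    (h : (p+1)%6 = r ∨ (r+1)%6 = p) : Dc i p j q ≤ Dc i r j q + 1 := by
  simp only [Dc, c6, Nat.dist]
  split_ifs <;> omega

lemma step (n i j p q : ℕ) (hi : i < n) (hj : j < n) (hp : p < 6) (hq : q < 6)
    (hne : A i p ≠ A j q) :
    ∃ i' p' r, i' < n ∧ p' < 6 ∧ r < 6 ∧ ((p'+1)%6 = r ∨ (r+1)%6 = p') ∧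
      A i' p' = A i p ∧ A i' r ≠ A i p ∧ D (A i' r) (A j q) + 1 = D (A i p) (A j q) := by
  rcases Nat.lt_trichotomy i j with hij | hij | hij
  · -- i < j
    by_cases hp2 : p = 2
    · subst hp2
      have hA : A (i+1) 0 = A i 2 := by
        rw [A_zero (i+1) (by omega)]; congr 1
      by_cases hj' : j = i + 1
      · subst hj'
        have hq0 : q ≠ 0 := by
          intro h0; subst h0
          exact hne (by rw [← hA])
        obtain ⟨r, hr6, hradj, h2⟩ := cycstep 0 q (by norm_num) hq (Ne.symm hq0)
        refine ⟨i+1, 0, r, hj, by norm_num, hr6, hradj, hA, ?_, ?_⟩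
        · rw [Ne, A_eq_iff _ _ _ _ hr6 (by norm_num)]
          simp only [c6, Nat.dist] at h2
          omega
        · rw [U _ _ _ _ hr6 hq, U _ _ _ _ (by norm_num) hq]
          simp only [Dc, c6, Nat.dist] at h2 ⊢
          split_ifs <;> omega
      · obtain ⟨r, hr6, hradj, h2⟩ := cycstep 0 2 (by norm_num) (by norm_num) (by norm_num)
        refine ⟨i+1, 0, r, by omega, by norm_num, hr6, hradj, hA, ?_, ?_⟩
        · rw [Ne, A_eq_iff _ _ _ _ hr6 (by norm_num)]
          simp only [c6, Nat.dist] at h2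
          omega
        · rw [U _ _ _ _ hr6 hq, U _ _ _ _ (by norm_num) hq]
          simp only [Dc, c6, Nat.dist] at h2 ⊢
          split_ifs <;> omega
    · obtain ⟨r, hr6, hradj, h2⟩ := cycstep p 2 hp (by norm_num) hp2
      refine ⟨i, p, r, hi, hp, hr6, hradj, rfl, ?_, ?_⟩
      · rw [Ne, A_eq_iff _ _ _ _ hr6 hp]
        simp only [c6, Nat.dist] at h2
        omega
      · rw [U _ _ _ _ hr6 hq, U _ _ _ _ hp hq]
        simp only [Dc, c6, Nat.dist] at h2 ⊢
        split_ifs <;> omega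
  · -- i = j
    subst hij
    have hpq : p ≠ q := fun h => hne (by rw [h])
    obtain ⟨r, hr6, hradj, h2⟩ := cycstep p q hp hq hpq
    refine ⟨i, p, r, hi, hp, hr6, hradj, rfl, ?_, ?_⟩
    · rw [Ne, A_eq_iff _ _ _ _ hr6 hp]
      simp only [c6, Nat.dist] at h2
      omega
    · rw [U _ _ _ _ hr6 hq, U _ _ _ _ hp hq]
      simp only [Dc, c6, Nat.dist] at h2 ⊢
      split_ifs <;> omega
  · -- j < i
    by_cases hp0 : p = 0
    · subst hp0
      have hA : A i 0 = A (i-1) 2 := A_zero i (by omega)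
      by_cases hj' : j = i - 1
      · subst hj'
        have hq2 : q ≠ 2 := by
          intro h2; subst h2
          exact hne hA
        obtain ⟨r, hr6, hradj, h2⟩ := cycstep 2 q (by norm_num) hq (Ne.symm hq2)
        refine ⟨i-1, 2, r, by omega, by norm_num, hr6, hradj, hA.symm, ?_, ?_⟩
        · rw [Ne, A_eq_iff _ _ _ _ hr6 (by norm_num)]
          simp only [c6, Nat.dist] at h2
          omega
        · rw [U _ _ _ _ hr6 hq, U _ _ _ _ (by norm_num) hq]
          simp only [Dc, c6, Nat.dist] at h2 ⊢
          split_ifs <;> omega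
      · obtain ⟨r, hr6, hradj, h2⟩ := cycstep 2 0 (by norm_num) (by norm_num) (by norm_num)
        refine ⟨i-1, 2, r, by omega, by norm_num, hr6, hradj, hA.symm, ?_, ?_⟩
        · rw [Ne, A_eq_iff _ _ _ _ hr6 (by norm_num)]
          simp only [c6, Nat.dist] at h2
          omega
        · rw [U _ _ _ _ hr6 hq, U _ _ _ _ (by norm_num) hq]
          simp only [Dc, c6, Nat.dist] at h2 ⊢
          split_ifs <;> omega
    · obtain ⟨r, hr6, hradj, h2⟩ := cycstep p 0 hp (by norm_num) hp0
      refine ⟨i, p, r, hi, hp, hr6, hradj, rfl, ?_, ?_⟩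
      · rw [Ne, A_eq_iff _ _ _ _ hr6 hp]
        simp only [c6, Nat.dist] at h2
        omega
      · rw [U _ _ _ _ hr6 hq, U _ _ _ _ hp hq]
        simp only [Dc, c6, Nat.dist] at h2 ⊢
        split_ifs <;> omega

end MH


namespace MH

lemma A_lt {n i p : ℕ} (hi : i < n) (hp : p < 6) : A i p < n * (6-1) + 1 := by
  rw [A_eq]; split_ifs <;> omega

lemma exists_rep {n m : ℕ} (hm : m < n * (6-1) + 1) (hn : 0 < n) :
    ∃ i p, i < n ∧ p < 6 ∧ m = A i p := by
  rcases Nat.eq_zero_or_pos m with h | h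
  · exact ⟨0, 0, hn, by norm_num, by rw [h, A_zero0]⟩
  · obtain ⟨hA, h1, h5⟩ := A_recover m h
    refine ⟨cyc m, pos m, ?_, by omega, hA.symm⟩
    simp only [cyc]; omega

lemma adj_intro {n i p r : ℕ} (hi : i < n) (hp : p < 6) (hr : r < 6)
    (hadj : (p+1)%6 = r ∨ (r+1)%6 = p) (hne : A i p ≠ A i r)
    (u v : Fin (n * (6-1) + 1)) (hu : u.val = A i p) (hv : v.val = A i r) :
    (cactusChain n 6 2).Adj u v := by
  refine ⟨?_, i, p, r, hi, hp, hr, hadj, hu, hv⟩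
  intro h
  exact hne (by rw [← hu, ← hv, h])

lemma D_lip {n : ℕ} (hn : 0 < n) {u v : Fin (n * (6-1) + 1)}
    (hadj : (cactusChain n 6 2).Adj u v) (w : Fin (n * (6-1) + 1)) :
    D u.val w.val ≤ D v.val w.val + 1 := by
  obtain ⟨hne, i, p, q, hi, hp, hq, hpq, hu, hv⟩ := hadj
  obtain ⟨j, s, hj, hs, hw⟩ := exists_rep w.isLt hn
  rw [hu, hv, hw]
  show D (A i p) (A j s) ≤ D (A i q) (A j s) + 1
  rw [U _ _ _ _ hp hs, U _ _ _ _ hq hs]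
  exact DcLip i j p q s hp hq hs hpq

lemma exists_walk {n : ℕ} (hn : 0 < n) :
    ∀ (m : ℕ) (u w : Fin (n * (6-1) + 1)), D u.val w.val ≤ m →
      ∃ pw : (cactusChain n 6 2).Walk u w, pw.length ≤ m := by
  intro m
  induction m with
  | zero =>
    intro u w h
    have : u = w := Fin.ext (D_eq_zero u.val w.val (by omega))
    subst this
    exact ⟨SimpleGraph.Walk.nil, by simp⟩
  | succ m ih =>
    intro u w h
    by_cases huw : u = w
    · subst huw; exact ⟨SimpleGraph.Walk.nil, by simp⟩
    · obtain ⟨i, p, hi, hp, hu⟩ := exists_rep u.isLt hn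
      obtain ⟨j, q, hj, hq, hw⟩ := exists_rep w.isLt hn
      have hne : A i p ≠ A j q := by
        rw [← hu, ← hw]
        exact fun hh => huw (Fin.ext hh)
      obtain ⟨i', p', r, hi', hp', hr', hradj, hApp, hAne, hD⟩ :=
        step n i j p q hi hj hp hq hne
      set u' : Fin (n * (6-1) + 1) := ⟨A i' r, A_lt hi' hr'⟩ with hu'
      have hadj : (cactusChain n 6 2).Adj u u' :=
        adj_intro hi' hp' hr' hradj
          (fun hh => hAne (by rw [← hh, hApp])) u u'
          (by rw [hu, ← hApp]) rfl
      have hval : D u'.val w.val + 1 = D u.val w.val := by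
        rw [show u'.val = A i' r from rfl, hu, hw]; exact hD
      obtain ⟨pw, hl⟩ := ih u' w (by omega)
      exact ⟨SimpleGraph.Walk.cons hadj pw, by simp only [SimpleGraph.Walk.length_cons]; omega⟩

theorem dist_eq {n : ℕ} (hn : 0 < n) (u w : Fin (n * (6-1) + 1)) :
    (cactusChain n 6 2).dist u w = D u.val w.val := by
  obtain ⟨pw, hl⟩ := exists_walk hn (D u.val w.val) u w le_rfl
  apply le_antisymm
  · exact le_trans (SimpleGraph.dist_le pw) hl
  · have hreach : (cactusChain n 6 2).Reachable u w := ⟨pw⟩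
    obtain ⟨sp, hsp⟩ := hreach.exists_walk_length_eq_dist
    rw [← hsp]
    have key : ∀ (a b : Fin (n * (6-1) + 1)) (qw : (cactusChain n 6 2).Walk a b),
        D a.val b.val ≤ qw.length := by
      intro a b qw
      induction qw with
      | nil => simp [D_self]
      | @cons x y z hxy q ih =>
        have := D_lip hn hxy z
        simp only [SimpleGraph.Walk.length_cons]
        omega
    exact key u w sp

lemma count {n i a b : ℕ} (hn : 0 < n) (hi : i < n) (ha : a < 6) (hb : b < 6) :
    ((Finset.range (n * (6-1) + 1)).filter (fun m => D m (A i a) < D m (A i b))).card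
      = (if c6 0 a < c6 0 b then 5*i+1 else 0)
        + ((Finset.Icc 1 5).filter (fun s => c6 s a < c6 s b)).card
        + (if c6 2 a < c6 2 b then 5*(n-1-i) else 0) := by
  have hsplit : Finset.range (n * (6-1) + 1)
      = (Finset.range (5*i+1) ∪ Finset.Ico (5*i+1) (5*i+6)) ∪ Finset.Ico (5*i+6) (n * (6-1) + 1) := by
    ext m
    simp only [Finset.mem_union, Finset.mem_range, Finset.mem_Ico]
    omega
  have hd1 : Disjoint (Finset.range (5*i+1)) (Finset.Ico (5*i+1) (5*i+6)) := by
    rw [Finset.disjoint_left]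
    intro m hm hm'
    simp only [Finset.mem_range, Finset.mem_Ico] at *
    omega
  have hd2 : Disjoint (Finset.range (5*i+1) ∪ Finset.Ico (5*i+1) (5*i+6))
      (Finset.Ico (5*i+6) (n * (6-1) + 1)) := by
    rw [Finset.disjoint_left]
    intro m hm hm'
    simp only [Finset.mem_union, Finset.mem_range, Finset.mem_Ico] at *
    omega
  rw [hsplit, Finset.filter_union, Finset.filter_union,
    Finset.card_union_of_disjoint (hd2.mono
      (Finset.union_subset_union (Finset.filter_subset _ _) (Finset.filter_subset _ _))
      (Finset.filter_subset _ _)),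
    Finset.card_union_of_disjoint (hd1.mono (Finset.filter_subset _ _) (Finset.filter_subset _ _))]
  congr 1
  · congr 1
    · -- left part
      have H : ∀ m ∈ Finset.range (5*i+1),
          (D m (A i a) < D m (A i b) ↔ c6 0 a < c6 0 b) := by
        intro m hm
        simp only [Finset.mem_range] at hm
        rcases Nat.eq_zero_or_pos m with h0 | h1
        · subst h0
          have e1 : D 0 (A i a) = Dc 0 0 i a := U 0 i 0 a (by norm_num) ha
          have e2 : D 0 (A i b) = Dc 0 0 i b := U 0 i 0 b (by norm_num) hb
          rw [e1, e2]
          simp only [Dc, c6, Nat.dist]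
          split_ifs <;> omega
        · obtain ⟨hA, hp1, hp5⟩ := A_recover m h1
          have hji : cyc m < i := by simp only [cyc]; omega
          rw [← hA, U _ _ _ _ (by omega) ha, U _ _ _ _ (by omega) hb]
          simp only [Dc, c6, Nat.dist]
          split_ifs <;> omega
      rw [Finset.filter_congr H, Finset.filter_const]
      by_cases hc : c6 0 a < c6 0 b <;> simp [hc]
    · -- middle part
      have key : ∀ s, 1 ≤ s → s ≤ 5 →
          (D (5*i+s) (A i a) < D (5*i+s) (A i b) ↔ c6 s a < c6 s b) := by
        intro s h1 h5
        rw [show 5*i+s = A i s from by rw [A_eq' i s h1],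
          U i i s a (by omega) ha, U i i s b (by omega) hb]
        simp [Dc]
      apply Finset.card_nbij' (fun m => m - 5*i) (fun s => 5*i + s)
      · intro m hm
        simp only [Finset.coe_filter, Set.mem_setOf_eq, Finset.mem_coe, Finset.mem_filter, Finset.mem_Ico] at hm
        simp only [Finset.coe_filter, Set.mem_setOf_eq, Finset.mem_coe, Finset.mem_filter, Finset.mem_Icc]
        have e : m = 5*i + (m - 5*i) := by omega
        refine ⟨by omega, ?_⟩
        rw [← key (m - 5*i) (by omega) (by omega)]
        rw [← e]
        exact hm.2
      · intro s hs
        simp only [Finset.coe_filter, Set.mem_setOf_eq, Finset.mem_coe, Finset.mem_filter, Finset.mem_Icc] at hs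
        simp only [Finset.coe_filter, Set.mem_setOf_eq, Finset.mem_coe, Finset.mem_filter, Finset.mem_Ico]
        refine ⟨by omega, ?_⟩
        rw [key s (by omega) (by omega)]
        exact hs.2
      · intro m hm
        simp only [Finset.coe_filter, Set.mem_setOf_eq, Finset.mem_coe, Finset.mem_filter, Finset.mem_Ico] at hm
        dsimp only
        omega
      · intro s hs
        simp only [Finset.coe_filter, Set.mem_setOf_eq, Finset.mem_coe, Finset.mem_filter, Finset.mem_Icc] at hs
        dsimp only
        omega
  · -- right part
    have H : ∀ m ∈ Finset.Ico (5*i+6) (n * (6-1) + 1),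
        (D m (A i a) < D m (A i b) ↔ c6 2 a < c6 2 b) := by
      intro m hm
      simp only [Finset.mem_Ico] at hm
      have h1 : 1 ≤ m := by omega
      obtain ⟨hA, hp1, hp5⟩ := A_recover m h1
      have hji : i < cyc m := by simp only [cyc]; omega
      rw [← hA, U _ _ _ _ (by omega) ha, U _ _ _ _ (by omega) hb]
      simp only [Dc, c6, Nat.dist]
      split_ifs <;> omega
    rw [Finset.filter_congr H, Finset.filter_const]
    by_cases hc : c6 2 a < c6 2 b <;> simp [hc, Nat.card_Ico] <;> omega

end MH

namespace MH

def tA (n i : ℕ) : ℕ := ((10*(i:ℤ) + 5) - 5*(n:ℤ)).natAbs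

lemma closer_eq {n i a b : ℕ} (hn : 0 < n) (hi : i < n) (ha : a < 6) (hb : b < 6)
    (u v : Fin (n * (6-1) + 1)) (hu : u.val = A i a) (hv : v.val = A i b) :
    closerCount (cactusChain n 6 2) u v
      = (if c6 0 a < c6 0 b then 5*i+1 else 0)
        + ((Finset.Icc 1 5).filter (fun s => c6 s a < c6 s b)).card
        + (if c6 2 a < c6 2 b then 5*(n-1-i) else 0) := by
  classical
  rw [closerCount, Nat.card_eq_fintype_card, Fintype.card_subtype, ← count hn hi ha hb]
  apply Finset.card_nbij' (fun (w : Fin (n * (6-1) + 1)) => w.val)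
    (fun m => ⟨m % (n * (6-1) + 1), Nat.mod_lt _ (Nat.succ_pos _)⟩)
  · intro x hx
    simp only [Finset.coe_filter, Set.mem_setOf_eq, Finset.mem_coe, Finset.mem_filter, Finset.mem_univ, true_and] at hx
    simp only [Finset.coe_filter, Set.mem_setOf_eq, Finset.mem_coe, Finset.mem_filter, Finset.mem_range]
    refine ⟨x.isLt, ?_⟩
    rw [← hu, ← hv, ← dist_eq hn x u, ← dist_eq hn x v]
    exact hx
  · intro m hm
    simp only [Finset.coe_filter, Set.mem_setOf_eq, Finset.mem_coe, Finset.mem_filter, Finset.mem_range] at hm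
    simp only [Finset.coe_filter, Set.mem_setOf_eq, Finset.mem_coe, Finset.mem_filter, Finset.mem_univ, true_and]
    rw [dist_eq hn _ u, dist_eq hn _ v]
    show D (m % (n * (6-1) + 1)) u.val < D (m % (n * (6-1) + 1)) v.val
    rw [Nat.mod_eq_of_lt hm.1, hu, hv]
    exact hm.2
  · intro x _
    exact Fin.ext (Nat.mod_eq_of_lt x.isLt)
  · intro m hm
    simp only [Finset.coe_filter, Set.mem_setOf_eq, Finset.mem_coe, Finset.mem_filter, Finset.mem_range] at hm
    exact Nat.mod_eq_of_lt hm.1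

lemma mostar_eq {V : Type*} [Fintype V] (G : SimpleGraph V) (E : Finset (Sym2 V))
    (hE : ∀ e, e ∈ E ↔ e ∈ G.edgeSet) : mostar G = ∑ e ∈ E, mostarTerm G e := by
  classical
  unfold mostar
  apply Finset.sum_congr _ (fun x _ => rfl)
  ext e
  simp only [SimpleGraph.edgeFinset, Set.mem_toFinset]
  exact (hE e).symm

def ffin (n i p : ℕ) : Fin (n * (6-1) + 1) :=
  ⟨A i p % (n * (6-1) + 1), Nat.mod_lt _ (Nat.succ_pos _)⟩

lemma ffin_val {n i p : ℕ} (hi : i < n) (hp : p < 6) : (ffin n i p).val = A i p :=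
  Nat.mod_eq_of_lt (A_lt hi hp)

def fedge (n : ℕ) (x : ℕ × ℕ) : Sym2 (Fin (n * (6-1) + 1)) :=
  s(ffin n x.1 x.2, ffin n x.1 ((x.2+1)%6))

lemma A_ne (i p : ℕ) (hp : p < 6) : A i p ≠ A i ((p+1)%6) := by
  rw [Ne, A_eq_iff i i p _ hp (Nat.mod_lt _ (by norm_num))]
  omega

lemma fedge_mem {n : ℕ} {x : ℕ × ℕ} (hx : x ∈ Finset.range n ×ˢ Finset.range 6) :
    fedge n x ∈ (cactusChain n 6 2).edgeSet := by
  obtain ⟨i, p⟩ := x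
  simp only [Finset.mem_product, Finset.mem_range] at hx
  rw [fedge, SimpleGraph.mem_edgeSet]
  exact adj_intro hx.1 hx.2 (Nat.mod_lt _ (by norm_num)) (Or.inl rfl)
    (A_ne i p hx.2) _ _ (ffin_val hx.1 hx.2) (ffin_val hx.1 (Nat.mod_lt _ (by norm_num)))

lemma edge_surj {n : ℕ} (e : Sym2 (Fin (n * (6-1) + 1)))
    (he : e ∈ (cactusChain n 6 2).edgeSet) :
    ∃ x ∈ Finset.range n ×ˢ Finset.range 6, fedge n x = e := by
  induction e with
  | _ u v =>
    rw [SimpleGraph.mem_edgeSet] at he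
    obtain ⟨hne, i, p, q, hi, hp, hq, hpq, hu, hv⟩ := he
    rcases hpq with h | h
    · refine ⟨(i, p), by simp only [Finset.mem_product, Finset.mem_range]; exact ⟨hi, hp⟩, ?_⟩
      have e1 : ffin n i p = u := Fin.ext (by rw [ffin_val hi hp]; exact hu.symm)
      have e2 : ffin n i ((p+1)%6) = v := by
        apply Fin.ext
        rw [ffin_val hi (Nat.mod_lt _ (by norm_num)), h]
        exact hv.symm
      rw [fedge, e1, e2]
    · refine ⟨(i, q), by simp only [Finset.mem_product, Finset.mem_range]; exact ⟨hi, hq⟩, ?_⟩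
      have e1 : ffin n i q = v := Fin.ext (by rw [ffin_val hi hq]; exact hv.symm)
      have e2 : ffin n i ((q+1)%6) = u := by
        apply Fin.ext
        rw [ffin_val hi (Nat.mod_lt _ (by norm_num)), h]
        exact hu.symm
      rw [fedge, e1, e2]
      exact Sym2.eq_swap

lemma fedge_inj {n : ℕ} : ∀ x ∈ Finset.range n ×ˢ Finset.range 6,
    ∀ y ∈ Finset.range n ×ˢ Finset.range 6, fedge n x = fedge n y → x = y := by
  rintro ⟨i, p⟩ hx ⟨j, q⟩ hy hxy
  simp only [Finset.mem_product, Finset.mem_range] at hx hy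
  rw [fedge, fedge, Sym2.eq_iff] at hxy
  have hp6 : (p+1)%6 < 6 := Nat.mod_lt _ (by norm_num)
  have hq6 : (q+1)%6 < 6 := Nat.mod_lt _ (by norm_num)
  simp only [Prod.mk.injEq]
  rcases hxy with ⟨h1, h2⟩ | ⟨h1, h2⟩
  · have g1 := congrArg Fin.val h1
    have g2 := congrArg Fin.val h2
    rw [ffin_val hx.1 hx.2, ffin_val hy.1 hy.2] at g1
    rw [ffin_val hx.1 hp6, ffin_val hy.1 hq6] at g2
    rw [A_eq_iff _ _ _ _ hx.2 hy.2] at g1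
    rw [A_eq_iff _ _ _ _ hp6 hq6] at g2
    omega
  · have g1 := congrArg Fin.val h1
    have g2 := congrArg Fin.val h2
    rw [ffin_val hx.1 hx.2, ffin_val hy.1 hq6] at g1
    rw [ffin_val hx.1 hp6, ffin_val hy.1 hy.2] at g2
    rw [A_eq_iff _ _ _ _ hx.2 hq6] at g1
    rw [A_eq_iff _ _ _ _ hp6 hy.2] at g2
    omega

lemma cc_eval {n i : ℕ} (hn : 0 < n) (hi : i < n) (a b : ℕ) (ha : a < 6) (hb : b < 6) :
    closerCount (cactusChain n 6 2) (ffin n i a) (ffin n i b)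
      = (if c6 0 a < c6 0 b then 5*i+1 else 0)
        + ((Finset.Icc 1 5).filter (fun s => c6 s a < c6 s b)).card
        + (if c6 2 a < c6 2 b then 5*(n-1-i) else 0) :=
  closer_eq hn hi ha hb _ _ (ffin_val hi ha) (ffin_val hi hb)

lemma inner_sum {n i : ℕ} (hn : 0 < n) (hi : i < n) :
    ∑ p ∈ Finset.range 6, mostarTerm (cactusChain n 6 2) (fedge n (i, p))
      = 4 * tA n i + 10*(n-1) := by
  simp only [Finset.sum_range_succ, Finset.sum_range_zero, fedge, mostarTerm, Sym2.lift_mk]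
  norm_num only
  rw [cc_eval hn hi 0 1 (by norm_num) (by norm_num),
      cc_eval hn hi 1 0 (by norm_num) (by norm_num),
      cc_eval hn hi 1 2 (by norm_num) (by norm_num),
      cc_eval hn hi 2 1 (by norm_num) (by norm_num),
      cc_eval hn hi 2 3 (by norm_num) (by norm_num),
      cc_eval hn hi 3 2 (by norm_num) (by norm_num),
      cc_eval hn hi 3 4 (by norm_num) (by norm_num),
      cc_eval hn hi 4 3 (by norm_num) (by norm_num),
      cc_eval hn hi 4 5 (by norm_num) (by norm_num),
      cc_eval hn hi 5 4 (by norm_num) (by norm_num),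
      cc_eval hn hi 5 0 (by norm_num) (by norm_num),
      cc_eval hn hi 0 5 (by norm_num) (by norm_num)]
  rw [show ((Finset.Icc 1 5).filter (fun s => c6 s 0 < c6 s 1)).card = 2 from by decide,
      show ((Finset.Icc 1 5).filter (fun s => c6 s 1 < c6 s 0)).card = 3 from by decide,
      show ((Finset.Icc 1 5).filter (fun s => c6 s 1 < c6 s 2)).card = 2 from by decide,
      show ((Finset.Icc 1 5).filter (fun s => c6 s 2 < c6 s 1)).card = 3 from by decide,
      show ((Finset.Icc 1 5).filter (fun s => c6 s 2 < c6 s 3)).card = 2 from by decide,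
      show ((Finset.Icc 1 5).filter (fun s => c6 s 3 < c6 s 2)).card = 3 from by decide,
      show ((Finset.Icc 1 5).filter (fun s => c6 s 3 < c6 s 4)).card = 3 from by decide,
      show ((Finset.Icc 1 5).filter (fun s => c6 s 4 < c6 s 3)).card = 2 from by decide,
      show ((Finset.Icc 1 5).filter (fun s => c6 s 4 < c6 s 5)).card = 3 from by decide,
      show ((Finset.Icc 1 5).filter (fun s => c6 s 5 < c6 s 4)).card = 2 from by decide,
      show ((Finset.Icc 1 5).filter (fun s => c6 s 5 < c6 s 0)).card = 3 from by decide,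
      show ((Finset.Icc 1 5).filter (fun s => c6 s 0 < c6 s 5)).card = 2 from by decide]
  simp only [c6, Nat.dist]
  norm_num
  unfold tA
  omega

lemma mostar_val {n : ℕ} (hn : 0 < n) :
    mostar (cactusChain n 6 2) = ∑ i ∈ Finset.range n, (4 * tA n i + 10*(n-1)) := by
  rw [mostar_eq (cactusChain n 6 2) ((Finset.range n ×ˢ Finset.range 6).image (fedge n))
      (fun e => ⟨fun he => by obtain ⟨x, hx, rfl⟩ := Finset.mem_image.mp he; exact fedge_mem hx,
                 fun he => Finset.mem_image.mpr (edge_surj e he)⟩)]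
  rw [Finset.sum_image fedge_inj, Finset.sum_product]
  exact Finset.sum_congr rfl (fun i hi0 => inner_sum hn (Finset.mem_range.mp hi0))

lemma sum_lin1 (k : ℕ) : ∑ j ∈ Finset.range k, (10*j+5) = 5*k^2 := by
  induction k with
  | zero => simp
  | succ m ih => rw [Finset.sum_range_succ, ih]; ring

lemma sum_lin2 (k : ℕ) : ∑ j ∈ Finset.range k, (10*j+10) = 5*k^2+5*k := by
  induction k with
  | zero => simp
  | succ m ih => rw [Finset.sum_range_succ, ih]; ring

lemma sum_lin3 (k : ℕ) : ∑ j ∈ Finset.range (k+1), (10*j) = 5*k^2+5*k := by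
  induction k with
  | zero => simp
  | succ m ih => rw [Finset.sum_range_succ, ih]; ring

lemma tA_even (k : ℕ) : ∑ i ∈ Finset.range (2*k), tA (2*k) i = 10*k^2 := by
  rw [Finset.range_eq_Ico,
    ← Finset.sum_Ico_consecutive _ (Nat.zero_le k) (by omega : k ≤ 2*k),
    ← Finset.range_eq_Ico, Finset.sum_Ico_eq_sum_range]
  have h1 : ∑ i ∈ Finset.range k, tA (2*k) i = ∑ j ∈ Finset.range k, (10*j+5) := by
    rw [← Finset.sum_range_reflect (fun i => tA (2*k) i) k]
    refine Finset.sum_congr rfl (fun j hj => ?_)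
    simp only [Finset.mem_range] at hj
    unfold tA
    omega
  have h2 : ∑ j ∈ Finset.range (2*k-k), tA (2*k) (k+j) = ∑ j ∈ Finset.range k, (10*j+5) := by
    rw [show 2*k-k = k from by omega]
    refine Finset.sum_congr rfl (fun j _ => ?_)
    unfold tA
    omega
  rw [h1, h2, sum_lin1]
  ring

lemma tA_odd (k : ℕ) : ∑ i ∈ Finset.range (2*k+1), tA (2*k+1) i = 10*k^2+10*k := by
  rw [Finset.range_eq_Ico,
    ← Finset.sum_Ico_consecutive _ (Nat.zero_le k) (by omega : k ≤ 2*k+1),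
    ← Finset.range_eq_Ico, Finset.sum_Ico_eq_sum_range]
  have h1 : ∑ i ∈ Finset.range k, tA (2*k+1) i = ∑ j ∈ Finset.range k, (10*j+10) := by
    rw [← Finset.sum_range_reflect (fun i => tA (2*k+1) i) k]
    refine Finset.sum_congr rfl (fun j hj => ?_)
    simp only [Finset.mem_range] at hj
    unfold tA
    omega
  have h2 : ∑ j ∈ Finset.range (2*k+1-k), tA (2*k+1) (k+j) = ∑ j ∈ Finset.range (k+1), (10*j) := by
    rw [show 2*k+1-k = k+1 from by omega]
    refine Finset.sum_congr rfl (fun j _ => ?_)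
    unfold tA
    omega
  rw [h1, h2, sum_lin2, sum_lin3]
  ring

end MH


theorem mostar_metaHex (k : ℕ) (hk : 1 ≤ k) :
    mostar (cactusChain (2 * k) 6 2) = 80 * k ^ 2 - 20 * k ∧
    mostar (cactusChain (2 * k + 1) 6 2) = 80 * k ^ 2 + 60 * k := by
  constructor
  · rw [MH.mostar_val (by omega : 0 < 2*k), Finset.sum_add_distrib, ← Finset.mul_sum,
      Finset.sum_const, Finset.card_range, smul_eq_mul, MH.tA_even k]
    have h1 : 20*k ≤ 80*k^2 := by nlinarith
    zify [h1]
    have h2 : ((2*k-1 : ℕ) : ℤ) = 2*(k:ℤ)-1 := by omega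
    rw [h2]
    ring
  · rw [MH.mostar_val (by omega : 0 < 2*k+1), Finset.sum_add_distrib, ← Finset.mul_sum,
      Finset.sum_const, Finset.card_range, smul_eq_mul, MH.tA_odd k,
      show 2*k+1-1 = 2*k from by omega]
    ring
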